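/- arXiv:1705.06212 — 3 statements merged into one kernel-verified Lean document; each statement's English description precedes it below -/
import Mathlib

section
/- Let (C₀, C₁, C₂, C₃) be a Descartes configuration of circles in the complex plane, and let k₀, k₁, k₂, k₃ be their signed curvatures. Then (k₀ + k₁ + k₂ + k₃)² = 2(k₀² + k₁² + k₂² + k₃²). -/
/-- A circle in the complex plane: a center and a positive radius. -/
structure PCircle where
  center : ℂ
  radius : ℝ
  radius_pos : 0 < radius

/-- The circle `C(z,r)` as the set `{w : ℂ | |w - z| = r}`. -/
def PCircle.toSet (c : PCircle) : Set ℂ := Metric.sphere c.center c.radius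

/-- Two circles are externally tangent if the distance between their centers
equals the sum of their radii. -/
def ExtTangent (c d : PCircle) : Prop :=
  dist c.center d.center = c.radius + d.radius

/-- `IntTangent c d` : the circle `c` is internally tangent to the (larger) circle `d`. -/
def IntTangent (c d : PCircle) : Prop :=
  c.radius < d.radius ∧ dist c.center d.center = d.radius - c.radius

/-- Two circles are tangent if they are externally tangent or one is internally
tangent to the other. -/
def Tangent (c d : PCircle) : Prop :=
  ExtTangent c d ∨ IntTangent c d ∨ IntTangent d c

/-- `c` and `d` are tangent and `p` is a common point of the two circles
(hence the point of tangency). -/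
def TangentAt (c d : PCircle) (p : ℂ) : Prop :=
  Tangent c d ∧ p ∈ c.toSet ∧ p ∈ d.toSet

/-- `c` is internally tangent to `d` at the point `p`. -/
def IntTangentAt (c d : PCircle) (p : ℂ) : Prop :=
  IntTangent c d ∧ p ∈ c.toSet ∧ p ∈ d.toSet

/-- A Descartes configuration: four circles `C0, C1, C2, C3` such that
`C1, C2, C3` are pairwise externally tangent and each is internally tangent
to the bounding circle `C0`. -/
structure DescartesConfig where
  C0 : PCircle
  C1 : PCircle
  C2 : PCircle
  C3 : PCircle
  h12 : ExtTangent C1 C2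
  h13 : ExtTangent C1 C3
  h23 : ExtTangent C2 C3
  h10 : IntTangent C1 C0
  h20 : IntTangent C2 C0
  h30 : IntTangent C3 C0

/-- The Apollonian gasket generated by a Descartes configuration: the smallest
collection of circles containing the four generating circles and closed under
inscribing a circle tangent to three pairwise tangent members at three
distinct points. -/
inductive InGasket (D : DescartesConfig) : PCircle → Prop
  | base0 : InGasket D D.C0
  | base1 : InGasket D D.C1
  | base2 : InGasket D D.C2
  | base3 : InGasket D D.C3
  | fill (a b c C : PCircle) (p₁ p₂ p₃ : ℂ) :
      InGasket D a → InGasket D b → InGasket D c →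
      Tangent a b → Tangent a c → Tangent b c →
      p₁ ≠ p₂ → p₁ ≠ p₃ → p₂ ≠ p₃ →
      TangentAt C a p₁ → TangentAt C b p₂ → TangentAt C c p₃ →
      InGasket D C

open Classical in
/-- The signed curvature of a circle of the gasket generated by `D`:
`-1/r` for the bounding circle `C0`, and `1/r` for every other circle. -/
noncomputable def signedCurv (D : DescartesConfig) (c : PCircle) : ℝ :=
  if c = D.C0 then -(1 / c.radius) else 1 / c.radius

/-- The residual set of the gasket generated by `D`: the closed disk bounded by
`C0` minus the open disks bounded by the other circles of the gasket. -/
def residualSet (D : DescartesConfig) : Set ℂ :=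
  Metric.closedBall D.C0.center D.C0.radius \
    ⋃ c ∈ {c : PCircle | InGasket D c ∧ c ≠ D.C0}, Metric.ball c.center c.radius

/-- **Descartes' circle theorem.** If `(C₀, C₁, C₂, C₃)` is a Descartes
configuration with signed curvatures `k₀ = -1/r₀`, `kᵢ = 1/rᵢ` (i = 1,2,3),
then `(k₀ + k₁ + k₂ + k₃)² = 2(k₀² + k₁² + k₂² + k₃²)`. -/
theorem descartes_circle_theorem (D : DescartesConfig)
    (k₀ k₁ k₂ k₃ : ℝ)
    (hk₀ : k₀ = -(1 / D.C0.radius))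
    (hk₁ : k₁ = 1 / D.C1.radius)
    (hk₂ : k₂ = 1 / D.C2.radius)
    (hk₃ : k₃ = 1 / D.C3.radius) :
    (k₀ + k₁ + k₂ + k₃) ^ 2 = 2 * (k₀ ^ 2 + k₁ ^ 2 + k₂ ^ 2 + k₃ ^ 2) := by
  obtain ⟨C0, C1, C2, C3, h12, h13, h23, h10, h20, h30⟩ := D
  set r0 := C0.radius with hr0
  set r1 := C1.radius with hr1
  set r2 := C2.radius with hr2
  set r3 := C3.radius with hr3
  set x1 := (C1.center - C0.center).re with hx1
  set y1 := (C1.center - C0.center).im with hy1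
  set x2 := (C2.center - C0.center).re with hx2
  set y2 := (C2.center - C0.center).im with hy2
  set x3 := (C3.center - C0.center).re with hy3
  set y3 := (C3.center - C0.center).im with hx3
  have sqd : ∀ z w : ℂ, ∀ t : ℝ, dist z w = t →
      (z - w).re * (z - w).re + (z - w).im * (z - w).im = t ^ 2 := by
    intro z w t h
    have h2 : ‖z - w‖ ^ 2 = t ^ 2 := by rw [← Complex.dist_eq, h]
    rw [Complex.sq_norm, Complex.normSq_apply] at h2
    exact h2
  have h1 : x1 * x1 + y1 * y1 = (r0 - r1) ^ 2 := sqd _ _ _ h10.2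
  have h2 : x2 * x2 + y2 * y2 = (r0 - r2) ^ 2 := sqd _ _ _ h20.2
  have h3 : x3 * x3 + y3 * y3 = (r0 - r3) ^ 2 := sqd _ _ _ h30.2
  have e12 : (x1 - x2) * (x1 - x2) + (y1 - y2) * (y1 - y2) = (r1 + r2) ^ 2 := by
    have := sqd _ _ _ h12
    simpa [Complex.sub_re, Complex.sub_im, hx1, hy1, hx2, hy2] using this
  have e13 : (x1 - x3) * (x1 - x3) + (y1 - y3) * (y1 - y3) = (r1 + r3) ^ 2 := by
    have := sqd _ _ _ h13
    simpa [Complex.sub_re, Complex.sub_im, hx1, hy1, hy3, hx3] using this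
  have e23 : (x2 - x3) * (x2 - x3) + (y2 - y3) * (y2 - y3) = (r2 + r3) ^ 2 := by
    have := sqd _ _ _ h23
    simpa [Complex.sub_re, Complex.sub_im, hx2, hy2, hy3, hx3] using this
  have hg12 : x1 * x2 + y1 * y2 = r0 ^ 2 - r0 * r1 - r0 * r2 - r1 * r2 := by
    linear_combination (h1 + h2 - e12) / 2
  have hg13 : x1 * x3 + y1 * y3 = r0 ^ 2 - r0 * r1 - r0 * r3 - r1 * r3 := by
    linear_combination (h1 + h3 - e13) / 2
  have hg23 : x2 * x3 + y2 * y3 = r0 ^ 2 - r0 * r2 - r0 * r3 - r2 * r3 := by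
    linear_combination (h2 + h3 - e23) / 2
  have hdet : (x1 * x1 + y1 * y1) * ((x2 * x2 + y2 * y2) * (x3 * x3 + y3 * y3))
      + 2 * ((x1 * x2 + y1 * y2) * ((x1 * x3 + y1 * y3) * (x2 * x3 + y2 * y3)))
      - (x1 * x1 + y1 * y1) * (x2 * x3 + y2 * y3) ^ 2
      - (x2 * x2 + y2 * y2) * (x1 * x3 + y1 * y3) ^ 2
      - (x3 * x3 + y3 * y3) * (x1 * x2 + y1 * y2) ^ 2 = 0 := by ring
  rw [h1, h2, h3, hg12, hg13, hg23] at hdet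
  have hr0' : r0 ≠ 0 := ne_of_gt C0.radius_pos
  have hr1' : r1 ≠ 0 := ne_of_gt C1.radius_pos
  have hr2' : r2 ≠ 0 := ne_of_gt C2.radius_pos
  have hr3' : r3 ≠ 0 := ne_of_gt C3.radius_pos
  subst hk₀ hk₁ hk₂ hk₃
  field_simp
  linear_combination (1 / 4 : ℝ) * hdet
end

section
/- There exists a Descartes configuration (C₀, C₁, C₂, C₃) such that every circle in the Apollonian gasket P generated by it has integer signed curvature. (For instance, the configuration with signed curvatures (-1, 2, 2, 3) has this property.) -/
set_option maxHeartbeats 1000000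

private lemma tangent_absurd {c d : PCircle} (h : Tangent c d)
    (hc : c.center = d.center) (hr : c.radius = d.radius) : False := by
  rcases h with h | h | h
  · rw [ExtTangent, hc, dist_self] at h
    have := c.radius_pos; have := d.radius_pos; linarith
  · exact absurd (hr ▸ h.1) (lt_irrefl _)
  · exact absurd (hr ▸ h.1) (lt_irrefl _)

private lemma tangent_cases {c d : PCircle} (h : Tangent c d) :
    dist c.center d.center ^ 2 = (c.radius + d.radius) ^ 2 ∨
    dist c.center d.center ^ 2 = (c.radius - d.radius) ^ 2 := by
  rcases h with h | h | h
  · exact Or.inl (by rw [h])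
  · refine Or.inr ?_
    rw [h.2]; ring
  · refine Or.inr ?_
    rw [dist_comm c.center d.center, h.2]

private lemma tangentAt_rel {c d : PCircle} {p : ℂ} (h : TangentAt c d p) :
    ∃ s : ℝ, s ^ 2 = 1 ∧
      (d.radius : ℂ) * (p - c.center) = (s : ℂ) * (c.radius : ℂ) * (d.center - p) := by
  obtain ⟨ht, hpc, hpd⟩ := h
  have hpc' : dist p c.center = c.radius := Metric.mem_sphere.mp hpc
  have hpd' : dist p d.center = d.radius := Metric.mem_sphere.mp hpd
  have hrc := c.radius_pos
  have hrd := d.radius_pos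
  rcases ht with hd | hd | hd
  · -- external
    have h1 : dist c.center p + dist p d.center = dist c.center d.center := by
      rw [dist_comm c.center p, hpc', hpd', hd]
    have hw : Wbtw ℝ c.center p d.center := dist_add_dist_eq_iff.mp h1
    obtain ⟨a, b, ha, hb, hab, hp⟩ := hw.mem_segment
    have ha' : a = 1 - b := by linarith
    rw [Complex.real_smul, Complex.real_smul] at hp
    have hpzc : p - c.center = (b : ℂ) * (d.center - c.center) := by
      rw [← hp, ha']; push_cast; ring
    have hdzp : d.center - p = (a : ℂ) * (d.center - c.center) := by
      rw [← hp, ha']; push_cast; ring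
    have hbv : c.radius = b * ‖d.center - c.center‖ := by
      rw [← hpc', dist_eq_norm, hpzc, norm_mul, Complex.norm_real, Real.norm_eq_abs,
        abs_of_nonneg hb]
    have hd' : ‖d.center - c.center‖ = c.radius + d.radius := by
      rw [← norm_sub_rev, ← dist_eq_norm]; exact hd
    have hscal : d.radius * b = c.radius * a := by
      rw [hd'] at hbv
      rw [ha']; linear_combination -hbv
    have hscalC : (d.radius : ℂ) * (b : ℂ) = (c.radius : ℂ) * (a : ℂ) := by
      exact_mod_cast congrArg (Complex.ofReal) hscal
    refine ⟨1, by norm_num, ?_⟩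
    rw [hpzc, hdzp]
    push_cast
    linear_combination (d.center - c.center) * hscalC
  · -- c internally tangent to d
    have h1 : dist p c.center + dist c.center d.center = dist p d.center := by
      rw [hpc', hpd', hd.2]; ring
    have hw : Wbtw ℝ p c.center d.center := dist_add_dist_eq_iff.mp h1
    obtain ⟨a, b, ha, hb, hab, hp⟩ := hw.mem_segment
    have ha' : a = 1 - b := by linarith
    rw [Complex.real_smul, Complex.real_smul] at hp
    have hzcp : c.center - p = (b : ℂ) * (d.center - p) := by
      rw [← hp, ha']; push_cast; ring
    have hbv : b * d.radius = c.radius := by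
      have : ‖c.center - p‖ = ‖(b : ℂ) * (d.center - p)‖ := by rw [hzcp]
      rw [norm_mul, Complex.norm_real, Real.norm_eq_abs, abs_of_nonneg hb] at this
      rw [← dist_eq_norm c.center p, dist_comm c.center p, hpc'] at this
      rw [← dist_eq_norm d.center p, dist_comm d.center p, hpd'] at this
      linarith [this]
    have hbC : (b : ℂ) * (d.radius : ℂ) = (c.radius : ℂ) := by
      exact_mod_cast congrArg (Complex.ofReal) hbv
    refine ⟨-1, by norm_num, ?_⟩
    push_cast
    linear_combination (-(d.center - p)) * hbC - (d.radius : ℂ) * hzcp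
  · -- d internally tangent to c
    have h1 : dist p d.center + dist d.center c.center = dist p c.center := by
      rw [hpc', hpd', hd.2]; ring
    have hw : Wbtw ℝ p d.center c.center := dist_add_dist_eq_iff.mp h1
    obtain ⟨a, b, ha, hb, hab, hp⟩ := hw.mem_segment
    have ha' : a = 1 - b := by linarith
    rw [Complex.real_smul, Complex.real_smul] at hp
    have hzdp : d.center - p = (b : ℂ) * (c.center - p) := by
      rw [← hp, ha']; push_cast; ring
    have hbv : b * c.radius = d.radius := by
      have : ‖d.center - p‖ = ‖(b : ℂ) * (c.center - p)‖ := by rw [hzdp]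
      rw [norm_mul, Complex.norm_real, Real.norm_eq_abs, abs_of_nonneg hb] at this
      rw [← dist_eq_norm d.center p, dist_comm d.center p, hpd'] at this
      rw [← dist_eq_norm c.center p, dist_comm c.center p, hpc'] at this
      linarith [this]
    have hbC : (b : ℂ) * (c.radius : ℂ) = (d.radius : ℂ) := by
      exact_mod_cast congrArg (Complex.ofReal) hbv
    refine ⟨-1, by norm_num, ?_⟩
    push_cast
    linear_combination (c.center - p) * hbC + (c.radius : ℂ) * hzdp

-- continuation: assumes geo.lean content above
private lemma dist_sq_coords (z w : ℂ) :
    dist z w ^ 2 = (z.re - w.re) ^ 2 + (z.im - w.im) ^ 2 := by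
  rw [Complex.dist_eq, Complex.sq_norm, Complex.normSq_apply, Complex.sub_re, Complex.sub_im]
  ring

private lemma tangentAt_data {D G : PCircle} {p : ℂ} (h : TangentAt D G p) :
    ∃ s : ℝ, s ^ 2 = 1 ∧ G.radius + s * D.radius ≠ 0 ∧
      ((G.radius + s * D.radius : ℝ) : ℂ) * p =
        (G.radius : ℂ) * D.center + (s : ℂ) * (D.radius : ℂ) * G.center ∧
      (G.radius + s * D.radius) ^ 2 =
        (D.center.re - G.center.re) ^ 2 + (D.center.im - G.center.im) ^ 2 := by
  obtain ⟨s, hs, hrel⟩ := tangentAt_rel h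
  have hpD : dist p D.center = D.radius := Metric.mem_sphere.mp h.2.1
  have hrD := D.radius_pos
  have hrG := G.radius_pos
  have hsne : s ≠ 0 := by intro h0; rw [h0] at hs; norm_num at hs
  have hC : ((G.radius + s * D.radius : ℝ) : ℂ) * (p - D.center) =
      (s : ℂ) * (D.radius : ℂ) * (G.center - D.center) := by
    push_cast
    linear_combination hrel
  have hne : G.radius + s * D.radius ≠ 0 := by
    intro h0
    have hr_eq : G.radius = D.radius := by
      have h1 : s ^ 2 * D.radius ^ 2 = G.radius ^ 2 := by nlinarith [h0]
      rw [hs] at h1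
      nlinarith [h1]
    have hz_eq : G.center = D.center := by
      rw [h0] at hC
      push_cast at hC
      have h2 : (s : ℂ) * (D.radius : ℂ) ≠ 0 := by
        apply mul_ne_zero
        · exact_mod_cast hsne
        · exact_mod_cast ne_of_gt hrD
      have h3 : (s : ℂ) * (D.radius : ℂ) * (G.center - D.center) = 0 := by
        rw [← hC]; ring
      rcases mul_eq_zero.mp h3 with h4 | h4
      · exact absurd h4 h2
      · exact sub_eq_zero.mp h4
    exact tangent_absurd h.1 hz_eq.symm hr_eq.symm
  refine ⟨s, hs, hne, by push_cast; linear_combination hrel, ?_⟩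
  have hQ2 : Complex.normSq ((G.radius + s * D.radius : ℝ) : ℂ) *
      Complex.normSq (p - D.center) =
      Complex.normSq ((s : ℂ) * (D.radius : ℂ)) * Complex.normSq (G.center - D.center) := by
    rw [← Complex.normSq_mul, ← Complex.normSq_mul, hC]
  rw [Complex.normSq_mul, Complex.normSq_ofReal, Complex.normSq_ofReal,
    Complex.normSq_ofReal] at hQ2
  have hnp : Complex.normSq (p - D.center) = D.radius ^ 2 := by
    rw [← Complex.sq_norm, ← Complex.dist_eq, hpD]
  have hnG : Complex.normSq (G.center - D.center) =
      (D.center.re - G.center.re) ^ 2 + (D.center.im - G.center.im) ^ 2 := by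
    rw [Complex.normSq_apply, Complex.sub_re, Complex.sub_im]; ring
  rw [hnp, hnG] at hQ2
  have hrne : D.radius ^ 2 ≠ 0 := pow_ne_zero 2 (ne_of_gt hrD)
  have h5 : (G.radius + s * D.radius) ^ 2 * D.radius ^ 2 =
      ((D.center.re - G.center.re) ^ 2 + (D.center.im - G.center.im) ^ 2) * D.radius ^ 2 := by
    linear_combination hQ2 + ((D.center.re - G.center.re) ^ 2 +
      (D.center.im - G.center.im) ^ 2) * D.radius ^ 2 * hs
  exact mul_right_cancel₀ hrne h5

private lemma normalize_i {G D : PCircle} {s dl ep Xv Yv : ℝ} {K E MX MY : ℤ}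
    (hs : s ^ 2 = 1)
    (hk : (K : ℝ) * G.radius = 1) (hx : G.center.re = G.radius * MX)
    (hy : G.center.im = G.radius * MY)
    (he : (E : ℝ) * G.radius = G.center.re ^ 2 + G.center.im ^ 2 - G.radius ^ 2)
    (hdl : dl * D.radius = 1) (hXv : Xv * D.radius = D.center.re)
    (hYv : Yv * D.radius = D.center.im)
    (hep : ep * D.radius = D.center.re ^ 2 + D.center.im ^ 2 - D.radius ^ 2)
    (hQ : (G.radius + s * D.radius) ^ 2 =
      (D.center.re - G.center.re) ^ 2 + (D.center.im - G.center.im) ^ 2) :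
    ((s * (MX : ℝ)) ^ 2 + (s * (MY : ℝ)) ^ 2 - (s * (K : ℝ)) * (s * (E : ℝ)) = 1) ∧
    (Xv * (s * (MX : ℝ)) + Yv * (s * (MY : ℝ)) -
      (dl * (s * (E : ℝ)) + ep * (s * (K : ℝ))) / 2 = -1) := by
  have hGr : G.radius ≠ 0 := ne_of_gt G.radius_pos
  have hDr : D.radius ≠ 0 := ne_of_gt D.radius_pos
  have base : (MX : ℝ) ^ 2 + (MY : ℝ) ^ 2 - (K : ℝ) * (E : ℝ) = 1 := by
    have h2 : ((MX : ℝ) ^ 2 + (MY : ℝ) ^ 2 - (K : ℝ) * (E : ℝ)) * G.radius ^ 2 =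
        1 * G.radius ^ 2 := by
      linear_combination (-(G.center.re + G.radius * (MX : ℝ))) * hx +
        (-(G.center.im + G.radius * (MY : ℝ))) * hy +
        (-((E : ℝ) * G.radius)) * hk - he
    exact mul_right_cancel₀ (pow_ne_zero 2 hGr) h2
  constructor
  · linear_combination ((MX : ℝ) ^ 2 + (MY : ℝ) ^ 2 - (K : ℝ) * (E : ℝ)) * hs + base
  · have h2ne : (2 : ℝ) * D.radius * G.radius ≠ 0 := by
      apply mul_ne_zero (mul_ne_zero two_ne_zero hDr) hGr
    have h3 : (Xv * (s * (MX : ℝ)) + Yv * (s * (MY : ℝ)) -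
        (dl * (s * (E : ℝ)) + ep * (s * (K : ℝ))) / 2) * (2 * D.radius * G.radius) =
        (-1) * (2 * D.radius * G.radius) := by
      linear_combination (2 * G.radius * s * (MX : ℝ)) * hXv +
        (2 * G.radius * s * (MY : ℝ)) * hYv +
        (-(G.radius * s * (E : ℝ))) * hdl + (-(G.radius * s * (K : ℝ))) * hep +
        (-s) * he + (-(s * (D.center.re ^ 2 + D.center.im ^ 2 - D.radius ^ 2))) * hk +
        (-(2 * s * D.center.re)) * hx + (-(2 * s * D.center.im)) * hy +
        s * hQ + (-(2 * D.radius * G.radius + s * D.radius ^ 2)) * hs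
    exact mul_right_cancel₀ h2ne h3

private lemma pair_data {G H : PCircle} {K1 E1 MX1 MY1 K2 E2 MX2 MY2 : ℤ}
    (hk1 : (K1 : ℝ) * G.radius = 1) (hx1 : G.center.re = G.radius * MX1)
    (hy1 : G.center.im = G.radius * MY1)
    (he1 : (E1 : ℝ) * G.radius = G.center.re ^ 2 + G.center.im ^ 2 - G.radius ^ 2)
    (hk2 : (K2 : ℝ) * H.radius = 1) (hx2 : H.center.re = H.radius * MX2)
    (hy2 : H.center.im = H.radius * MY2)
    (he2 : (E2 : ℝ) * H.radius = H.center.re ^ 2 + H.center.im ^ 2 - H.radius ^ 2)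
    (ht : Tangent G H) :
    (MX1 : ℝ) * MX2 + (MY1 : ℝ) * MY2 - ((K1 : ℝ) * E2 + (E1 : ℝ) * K2) / 2 = -1 ∨
    (MX1 : ℝ) * MX2 + (MY1 : ℝ) * MY2 - ((K1 : ℝ) * E2 + (E1 : ℝ) * K2) / 2 = 1 := by
  have hGr : G.radius ≠ 0 := ne_of_gt G.radius_pos
  have hHr : H.radius ≠ 0 := ne_of_gt H.radius_pos
  have h2ne : (2 : ℝ) * G.radius * H.radius ≠ 0 :=
    mul_ne_zero (mul_ne_zero two_ne_zero hGr) hHr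
  have hdc : dist G.center H.center ^ 2 =
      (G.center.re - H.center.re) ^ 2 + (G.center.im - H.center.im) ^ 2 :=
    dist_sq_coords _ _
  rcases tangent_cases ht with hd | hd
  · refine Or.inl ?_
    rw [hdc] at hd
    have h3 : ((MX1 : ℝ) * MX2 + (MY1 : ℝ) * MY2 - ((K1 : ℝ) * E2 + (E1 : ℝ) * K2) / 2) *
        (2 * G.radius * H.radius) = (-1) * (2 * G.radius * H.radius) := by
      linear_combination (-(2 * H.radius * (MX2 : ℝ))) * hx1 + (-(2 * G.center.re)) * hx2 +
        (-(2 * H.radius * (MY2 : ℝ))) * hy1 + (-(2 * G.center.im)) * hy2 +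
        (-((E2 : ℝ) * H.radius)) * hk1 + (-((E1 : ℝ) * G.radius)) * hk2 - he1 - he2 - hd
    exact mul_right_cancel₀ h2ne h3
  · refine Or.inr ?_
    rw [hdc] at hd
    have h3 : ((MX1 : ℝ) * MX2 + (MY1 : ℝ) * MY2 - ((K1 : ℝ) * E2 + (E1 : ℝ) * K2) / 2) *
        (2 * G.radius * H.radius) = 1 * (2 * G.radius * H.radius) := by
      linear_combination (-(2 * H.radius * (MX2 : ℝ))) * hx1 + (-(2 * G.center.re)) * hx2 +
        (-(2 * H.radius * (MY2 : ℝ))) * hy1 + (-(2 * G.center.im)) * hy2 +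
        (-((E2 : ℝ) * H.radius)) * hk1 + (-((E1 : ℝ) * G.radius)) * hk2 - he1 - he2 - hd
    exact mul_right_cancel₀ h2ne h3

private lemma pair_orient {G1 G2 D : PCircle} {p1 p2 : ℂ} {s1 s2 dl ep Xv Yv : ℝ}
    {K1 E1 MX1 MY1 K2 E2 MX2 MY2 : ℤ}
    (hs1 : s1 ^ 2 = 1) (hs2 : s2 ^ 2 = 1)
    (hdl : dl * D.radius = 1) (hXv : Xv * D.radius = D.center.re)
    (hYv : Yv * D.radius = D.center.im)
    (hk1 : (K1 : ℝ) * G1.radius = 1) (hx1 : G1.center.re = G1.radius * MX1)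
    (hy1 : G1.center.im = G1.radius * MY1)
    (hk2 : (K2 : ℝ) * G2.radius = 1) (hx2 : G2.center.re = G2.radius * MX2)
    (hy2 : G2.center.im = G2.radius * MY2)
    (hFv : Xv ^ 2 + Yv ^ 2 - dl * ep = 1)
    (hF1 : (s1 * (MX1 : ℝ)) ^ 2 + (s1 * (MY1 : ℝ)) ^ 2 -
      (s1 * (K1 : ℝ)) * (s1 * (E1 : ℝ)) = 1)
    (hF2 : (s2 * (MX2 : ℝ)) ^ 2 + (s2 * (MY2 : ℝ)) ^ 2 -
      (s2 * (K2 : ℝ)) * (s2 * (E2 : ℝ)) = 1)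
    (hL1 : Xv * (s1 * (MX1 : ℝ)) + Yv * (s1 * (MY1 : ℝ)) -
      (dl * (s1 * (E1 : ℝ)) + ep * (s1 * (K1 : ℝ))) / 2 = -1)
    (hL2 : Xv * (s2 * (MX2 : ℝ)) + Yv * (s2 * (MY2 : ℝ)) -
      (dl * (s2 * (E2 : ℝ)) + ep * (s2 * (K2 : ℝ))) / 2 = -1)
    (hB : (MX1 : ℝ) * MX2 + (MY1 : ℝ) * MY2 - ((K1 : ℝ) * E2 + (E1 : ℝ) * K2) / 2 = -1 ∨
      (MX1 : ℝ) * MX2 + (MY1 : ℝ) * MY2 - ((K1 : ℝ) * E2 + (E1 : ℝ) * K2) / 2 = 1)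
    (hne1 : G1.radius + s1 * D.radius ≠ 0) (hne2 : G2.radius + s2 * D.radius ≠ 0)
    (hE1 : ((G1.radius + s1 * D.radius : ℝ) : ℂ) * p1 =
      (G1.radius : ℂ) * D.center + (s1 : ℂ) * (D.radius : ℂ) * G1.center)
    (hE2 : ((G2.radius + s2 * D.radius : ℝ) : ℂ) * p2 =
      (G2.radius : ℂ) * D.center + (s2 : ℂ) * (D.radius : ℂ) * G2.center)
    (hp : p1 ≠ p2) :
    (s1 * (MX1 : ℝ)) * (s2 * (MX2 : ℝ)) + (s1 * (MY1 : ℝ)) * (s2 * (MY2 : ℝ)) -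
      ((s1 * (K1 : ℝ)) * (s2 * (E2 : ℝ)) + (s1 * (E1 : ℝ)) * (s2 * (K2 : ℝ))) / 2 = -1 := by
  have hT2 : (s1 * s2 * ((MX1 : ℝ) * MX2 + (MY1 : ℝ) * MY2 -
      ((K1 : ℝ) * E2 + (E1 : ℝ) * K2) / 2) - 1) *
      (s1 * s2 * ((MX1 : ℝ) * MX2 + (MY1 : ℝ) * MY2 -
      ((K1 : ℝ) * E2 + (E1 : ℝ) * K2) / 2) + 1) = 0 := by
    rcases hB with h | h <;> rw [h] <;>
      linear_combination (s1 ^ 2) * hs2 + hs1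
  rcases mul_eq_zero.mp hT2 with hg | hg
  · -- bad case : oriented product = 1, derive p1 = p2
    exfalso
    have hg1 : s1 * s2 * ((MX1 : ℝ) * MX2 + (MY1 : ℝ) * MY2 -
        ((K1 : ℝ) * E2 + (E1 : ℝ) * K2) / 2) = 1 := by linarith
    obtain ⟨a1, ha1d⟩ : ∃ a : ℝ, a = dl + s1 * (K1 : ℝ) := ⟨_, rfl⟩
    obtain ⟨a2, ha2d⟩ : ∃ a : ℝ, a = dl + s2 * (K2 : ℝ) := ⟨_, rfl⟩
    have har1 : a1 * (D.radius * G1.radius) = G1.radius + s1 * D.radius := by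
      rw [ha1d]; linear_combination G1.radius * hdl + (s1 * D.radius) * hk1
    have har2 : a2 * (D.radius * G2.radius) = G2.radius + s2 * D.radius := by
      rw [ha2d]; linear_combination G2.radius * hdl + (s2 * D.radius) * hk2
    have ha1 : a1 ≠ 0 := by
      intro h0; rw [h0, zero_mul] at har1; exact hne1 har1.symm
    have ha2 : a2 ≠ 0 := by
      intro h0; rw [h0, zero_mul] at har2; exact hne2 har2.symm
    have hN1 : (Xv + s1 * (MX1 : ℝ)) ^ 2 + (Yv + s1 * (MY1 : ℝ)) ^ 2 -
        a1 * (ep + s1 * (E1 : ℝ)) = 0 := by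
      rw [ha1d]; linear_combination hFv + 2 * hL1 + hF1
    have hN2 : (Xv + s2 * (MX2 : ℝ)) ^ 2 + (Yv + s2 * (MY2 : ℝ)) ^ 2 -
        a2 * (ep + s2 * (E2 : ℝ)) = 0 := by
      rw [ha2d]; linear_combination hFv + 2 * hL2 + hF2
    have hN12 : (Xv + s1 * (MX1 : ℝ)) * (Xv + s2 * (MX2 : ℝ)) +
        (Yv + s1 * (MY1 : ℝ)) * (Yv + s2 * (MY2 : ℝ)) -
        (a1 * (ep + s2 * (E2 : ℝ)) + a2 * (ep + s1 * (E1 : ℝ))) / 2 = 0 := by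
      rw [ha1d, ha2d]; linear_combination hFv + hL1 + hL2 + hg1
    have hzero : (a2 * (Xv + s1 * (MX1 : ℝ)) - a1 * (Xv + s2 * (MX2 : ℝ))) ^ 2 +
        (a2 * (Yv + s1 * (MY1 : ℝ)) - a1 * (Yv + s2 * (MY2 : ℝ))) ^ 2 = 0 := by
      linear_combination a2 ^ 2 * hN1 + a1 ^ 2 * hN2 - 2 * a1 * a2 * hN12
    have hA : a2 * (Xv + s1 * (MX1 : ℝ)) - a1 * (Xv + s2 * (MX2 : ℝ)) = 0 := by
      have h1 : (a2 * (Xv + s1 * (MX1 : ℝ)) - a1 * (Xv + s2 * (MX2 : ℝ))) ^ 2 = 0 :=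
        le_antisymm (by linarith [sq_nonneg (a2 * (Yv + s1 * (MY1 : ℝ)) -
          a1 * (Yv + s2 * (MY2 : ℝ)))]) (sq_nonneg _)
      exact pow_eq_zero_iff two_ne_zero |>.mp h1
    have hBz : a2 * (Yv + s1 * (MY1 : ℝ)) - a1 * (Yv + s2 * (MY2 : ℝ)) = 0 := by
      have h1 : (a2 * (Yv + s1 * (MY1 : ℝ)) - a1 * (Yv + s2 * (MY2 : ℝ))) ^ 2 = 0 :=
        le_antisymm (by linarith [sq_nonneg (a2 * (Xv + s1 * (MX1 : ℝ)) -
          a1 * (Xv + s2 * (MX2 : ℝ)))]) (sq_nonneg _)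
      exact pow_eq_zero_iff two_ne_zero |>.mp h1
    have hu1x : (Xv + s1 * (MX1 : ℝ)) * (D.radius * G1.radius) =
        G1.radius * D.center.re + s1 * D.radius * G1.center.re := by
      linear_combination G1.radius * hXv - s1 * D.radius * hx1
    have hu2x : (Xv + s2 * (MX2 : ℝ)) * (D.radius * G2.radius) =
        G2.radius * D.center.re + s2 * D.radius * G2.center.re := by
      linear_combination G2.radius * hXv - s2 * D.radius * hx2
    have hu1y : (Yv + s1 * (MY1 : ℝ)) * (D.radius * G1.radius) =
        G1.radius * D.center.im + s1 * D.radius * G1.center.im := by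
      linear_combination G1.radius * hYv - s1 * D.radius * hy1
    have hu2y : (Yv + s2 * (MY2 : ℝ)) * (D.radius * G2.radius) =
        G2.radius * D.center.im + s2 * D.radius * G2.center.im := by
      linear_combination G2.radius * hYv - s2 * D.radius * hy2
    have hprop_re : (G2.radius + s2 * D.radius) *
        (G1.radius * D.center.re + s1 * D.radius * G1.center.re) =
        (G1.radius + s1 * D.radius) *
        (G2.radius * D.center.re + s2 * D.radius * G2.center.re) := by
      linear_combination (-(G2.radius + s2 * D.radius)) * hu1x +
        (G1.radius + s1 * D.radius) * hu2x -
        ((Xv + s1 * (MX1 : ℝ)) * (D.radius * G1.radius)) * har2 +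
        ((Xv + s2 * (MX2 : ℝ)) * (D.radius * G2.radius)) * har1 +
        (D.radius * G1.radius) * (D.radius * G2.radius) * hA
    have hprop_im : (G2.radius + s2 * D.radius) *
        (G1.radius * D.center.im + s1 * D.radius * G1.center.im) =
        (G1.radius + s1 * D.radius) *
        (G2.radius * D.center.im + s2 * D.radius * G2.center.im) := by
      linear_combination (-(G2.radius + s2 * D.radius)) * hu1y +
        (G1.radius + s1 * D.radius) * hu2y -
        ((Yv + s1 * (MY1 : ℝ)) * (D.radius * G1.radius)) * har2 +
        ((Yv + s2 * (MY2 : ℝ)) * (D.radius * G2.radius)) * har1 +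
        (D.radius * G1.radius) * (D.radius * G2.radius) * hBz
    have hQC : ((G2.radius + s2 * D.radius : ℝ) : ℂ) *
        ((G1.radius : ℂ) * D.center + (s1 : ℂ) * (D.radius : ℂ) * G1.center) =
        ((G1.radius + s1 * D.radius : ℝ) : ℂ) *
        ((G2.radius : ℂ) * D.center + (s2 : ℂ) * (D.radius : ℂ) * G2.center) := by
      apply Complex.ext
      · simp only [Complex.mul_re, Complex.add_re, Complex.add_im, Complex.mul_im,
          Complex.ofReal_re, Complex.ofReal_im]
        linear_combination hprop_re
      · simp only [Complex.mul_re, Complex.add_re, Complex.add_im, Complex.mul_im,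
          Complex.ofReal_re, Complex.ofReal_im]
        linear_combination hprop_im
    have hCC : ((G1.radius + s1 * D.radius : ℝ) : ℂ) *
        (((G2.radius + s2 * D.radius : ℝ) : ℂ) * (p1 - p2)) = 0 := by
      linear_combination ((G2.radius + s2 * D.radius : ℝ) : ℂ) * hE1 -
        ((G1.radius + s1 * D.radius : ℝ) : ℂ) * hE2 + hQC
    have hne1C : ((G1.radius + s1 * D.radius : ℝ) : ℂ) ≠ 0 := Complex.ofReal_ne_zero.mpr hne1
    have hne2C : ((G2.radius + s2 * D.radius : ℝ) : ℂ) ≠ 0 := Complex.ofReal_ne_zero.mpr hne2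
    rcases mul_eq_zero.mp hCC with h | h
    · exact hne1C h
    · rcases mul_eq_zero.mp h with h' | h'
      · exact hne2C h'
      · exact hp (sub_eq_zero.mp h')
  · -- good case
    have hg1 : s1 * s2 * ((MX1 : ℝ) * MX2 + (MY1 : ℝ) * MY2 -
        ((K1 : ℝ) * E2 + (E1 : ℝ) * K2) / 2) = -1 := by linarith
    linear_combination hg1

set_option maxHeartbeats 2000000

private lemma magic_b (k1 e1 x1 y1 k2 e2 x2 y2 k3 e3 x3 y3 nB nE nX nY db de dx dy : ℝ)
    (hnb : nB = (2*(k1*(x2*y3 - y2*x3) - x1*(k2*y3 - y2*k3) + y1*(k2*x3 - x2*k3))))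
    (hne : nE = (-2*(e1*(x2*y3 - y2*x3) - x1*(e2*y3 - y2*e3) + y1*(e2*x3 - x2*e3))))
    (hnx : nX = (k1*(e2*y3 - y2*e3) - e1*(k2*y3 - y2*k3) + y1*(k2*e3 - e2*k3)))
    (hny : nY = (-(k1*(e2*x3 - x2*e3) - e1*(k2*x3 - x2*k3) + x1*(k2*e3 - e2*k3))))
    : (nX^2 + nY^2 - nB*nE) * db = ((dx*nX + dy*nY - (db*nE + de*nB)/2)) * nB
      - (((dx*x1 + dy*y1 - (db*e1 + de*k1)/2)) * (2*(k2*(x3*nY - y3*nX) - x2*(k3*nY - y3*nB) + y2*(k3*nX - x3*nB))) + ((dx*x2 + dy*y2 - (db*e2 + de*k2)/2)) * (2*(k3*(x1*nY - y1*nX) - x3*(k1*nY - y1*nB) + y3*(k1*nX - x1*nB))) + ((dx*x3 + dy*y3 - (db*e3 + de*k3)/2)) * (2*(k1*(x2*nY - y2*nX) - x1*(k2*nY - y2*nB) + y1*(k2*nX - x2*nB)))) := by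
  subst hnb hne hnx hny; ring

private lemma magic_e (k1 e1 x1 y1 k2 e2 x2 y2 k3 e3 x3 y3 nB nE nX nY db de dx dy : ℝ)
    (hnb : nB = (2*(k1*(x2*y3 - y2*x3) - x1*(k2*y3 - y2*k3) + y1*(k2*x3 - x2*k3))))
    (hne : nE = (-2*(e1*(x2*y3 - y2*x3) - x1*(e2*y3 - y2*e3) + y1*(e2*x3 - x2*e3))))
    (hnx : nX = (k1*(e2*y3 - y2*e3) - e1*(k2*y3 - y2*k3) + y1*(k2*e3 - e2*k3)))
    (hny : nY = (-(k1*(e2*x3 - x2*e3) - e1*(k2*x3 - x2*k3) + x1*(k2*e3 - e2*k3))))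
    : (nX^2 + nY^2 - nB*nE) * de = ((dx*nX + dy*nY - (db*nE + de*nB)/2)) * nE
      - (((dx*x1 + dy*y1 - (db*e1 + de*k1)/2)) * (-2*(e2*(x3*nY - y3*nX) - x2*(e3*nY - y3*nE) + y2*(e3*nX - x3*nE))) + ((dx*x2 + dy*y2 - (db*e2 + de*k2)/2)) * (-2*(e3*(x1*nY - y1*nX) - x3*(e1*nY - y1*nE) + y3*(e1*nX - x1*nE))) + ((dx*x3 + dy*y3 - (db*e3 + de*k3)/2)) * (-2*(e1*(x2*nY - y2*nX) - x1*(e2*nY - y2*nE) + y1*(e2*nX - x2*nE)))) := by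
  subst hnb hne hnx hny; ring

private lemma magic_x (k1 e1 x1 y1 k2 e2 x2 y2 k3 e3 x3 y3 nB nE nX nY db de dx dy : ℝ)
    (hnb : nB = (2*(k1*(x2*y3 - y2*x3) - x1*(k2*y3 - y2*k3) + y1*(k2*x3 - x2*k3))))
    (hne : nE = (-2*(e1*(x2*y3 - y2*x3) - x1*(e2*y3 - y2*e3) + y1*(e2*x3 - x2*e3))))
    (hnx : nX = (k1*(e2*y3 - y2*e3) - e1*(k2*y3 - y2*k3) + y1*(k2*e3 - e2*k3)))
    (hny : nY = (-(k1*(e2*x3 - x2*e3) - e1*(k2*x3 - x2*k3) + x1*(k2*e3 - e2*k3))))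
    : (nX^2 + nY^2 - nB*nE) * dx = ((dx*nX + dy*nY - (db*nE + de*nB)/2)) * nX
      - (((dx*x1 + dy*y1 - (db*e1 + de*k1)/2)) * (k2*(e3*nY - y3*nE) - e2*(k3*nY - y3*nB) + y2*(k3*nE - e3*nB)) + ((dx*x2 + dy*y2 - (db*e2 + de*k2)/2)) * (k3*(e1*nY - y1*nE) - e3*(k1*nY - y1*nB) + y3*(k1*nE - e1*nB)) + ((dx*x3 + dy*y3 - (db*e3 + de*k3)/2)) * (k1*(e2*nY - y2*nE) - e1*(k2*nY - y2*nB) + y1*(k2*nE - e2*nB))) := by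
  subst hnb hne hnx hny; ring

private lemma magic_y (k1 e1 x1 y1 k2 e2 x2 y2 k3 e3 x3 y3 nB nE nX nY db de dx dy : ℝ)
    (hnb : nB = (2*(k1*(x2*y3 - y2*x3) - x1*(k2*y3 - y2*k3) + y1*(k2*x3 - x2*k3))))
    (hne : nE = (-2*(e1*(x2*y3 - y2*x3) - x1*(e2*y3 - y2*e3) + y1*(e2*x3 - x2*e3))))
    (hnx : nX = (k1*(e2*y3 - y2*e3) - e1*(k2*y3 - y2*k3) + y1*(k2*e3 - e2*k3)))
    (hny : nY = (-(k1*(e2*x3 - x2*e3) - e1*(k2*x3 - x2*k3) + x1*(k2*e3 - e2*k3))))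
    : (nX^2 + nY^2 - nB*nE) * dy = ((dx*nX + dy*nY - (db*nE + de*nB)/2)) * nY
      - (((dx*x1 + dy*y1 - (db*e1 + de*k1)/2)) * (-(k2*(e3*nX - x3*nE) - e2*(k3*nX - x3*nB) + x2*(k3*nE - e3*nB))) + ((dx*x2 + dy*y2 - (db*e2 + de*k2)/2)) * (-(k3*(e1*nX - x1*nE) - e3*(k1*nX - x1*nB) + x3*(k1*nE - e1*nB))) + ((dx*x3 + dy*y3 - (db*e3 + de*k3)/2)) * (-(k1*(e2*nX - x2*nE) - e1*(k2*nX - x2*nB) + x1*(k2*nE - e2*nB)))) := by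
  subst hnb hne hnx hny; ring

private lemma core (k1 e1 x1 y1 k2 e2 x2 y2 k3 e3 x3 y3 dl ep X Y : ℝ)
    (hF1 : x1^2 + y1^2 - k1*e1 = 1) (hF2 : x2^2 + y2^2 - k2*e2 = 1) (hF3 : x3^2 + y3^2 - k3*e3 = 1)
    (hFv : X^2 + Y^2 - dl*ep = 1)
    (hL1 : X*x1 + Y*y1 - (dl*e1 + ep*k1)/2 = -1) (hL2 : X*x2 + Y*y2 - (dl*e2 + ep*k2)/2 = -1) (hL3 : X*x3 + Y*y3 - (dl*e3 + ep*k3)/2 = -1)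
    (hT12 : x1*x2 + y1*y2 - (k1*e2 + e1*k2)/2 = -1) (hT13 : x1*x3 + y1*y3 - (k1*e3 + e1*k3)/2 = -1) (hT23 : x2*x3 + y2*y3 - (k2*e3 + e2*k3)/2 = -1) :
    ∃ t : ℝ, (t = 1 ∨ t = -1) ∧
      dl = k1 + k2 + k3 + t * (k1*(x2*y3 - y2*x3) - x1*(k2*y3 - y2*k3) + y1*(k2*x3 - x2*k3)) ∧
      ep = e1 + e2 + e3 - t * (e1*(x2*y3 - y2*x3) - x1*(e2*y3 - y2*e3) + y1*(e2*x3 - x2*e3)) ∧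
      X = x1 + x2 + x3 + t * (k1*(e2*y3 - y2*e3) - e1*(k2*y3 - y2*k3) + y1*(k2*e3 - e2*k3)) / 2 ∧
      Y = y1 + y2 + y3 - t * (k1*(e2*x3 - x2*e3) - e1*(k2*x3 - x2*k3) + x1*(k2*e3 - e2*k3)) / 2 := by
  obtain ⟨nB, hnb⟩ : ∃ a : ℝ, a = (2*(k1*(x2*y3 - y2*x3) - x1*(k2*y3 - y2*k3) + y1*(k2*x3 - x2*k3))) := ⟨_, rfl⟩
  obtain ⟨nE, hne⟩ : ∃ a : ℝ, a = (-2*(e1*(x2*y3 - y2*x3) - x1*(e2*y3 - y2*e3) + y1*(e2*x3 - x2*e3))) := ⟨_, rfl⟩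
  obtain ⟨nX, hnx⟩ : ∃ a : ℝ, a = (k1*(e2*y3 - y2*e3) - e1*(k2*y3 - y2*k3) + y1*(k2*e3 - e2*k3)) := ⟨_, rfl⟩
  obtain ⟨nY, hny⟩ : ∃ a : ℝ, a = (-(k1*(e2*x3 - x2*e3) - e1*(k2*x3 - x2*k3) + x1*(k2*e3 - e2*k3))) := ⟨_, rfl⟩
  obtain ⟨qb, hqb⟩ : ∃ a : ℝ, a = dl - (k1 + k2 + k3) := ⟨_, rfl⟩
  obtain ⟨qe, hqe⟩ : ∃ a : ℝ, a = ep - (e1 + e2 + e3) := ⟨_, rfl⟩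
  obtain ⟨qx, hqx⟩ : ∃ a : ℝ, a = X - (x1 + x2 + x3) := ⟨_, rfl⟩
  obtain ⟨qy, hqy⟩ : ∃ a : ℝ, a = Y - (y1 + y2 + y3) := ⟨_, rfl⟩
  obtain ⟨tau, htau⟩ : ∃ a : ℝ, a = qx*nX + qy*nY - (qb*nE + qe*nB)/2 := ⟨_, rfl⟩
  obtain ⟨db, hdb⟩ : ∃ a : ℝ, a = qb - tau/16*nB := ⟨_, rfl⟩
  obtain ⟨de, hde⟩ : ∃ a : ℝ, a = qe - tau/16*nE := ⟨_, rfl⟩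
  obtain ⟨dx, hdx⟩ : ∃ a : ℝ, a = qx - tau/16*nX := ⟨_, rfl⟩
  obtain ⟨dy, hdy⟩ : ∃ a : ℝ, a = qy - tau/16*nY := ⟨_, rfl⟩
  have H16 : nX^2 + nY^2 - nB*nE = 16 := by
    have h : -(1/4) * (nX^2 + nY^2 - nB*nE) =
        (x1^2 + y1^2 - k1*e1) * ((x2^2 + y2^2 - k2*e2) * (x3^2 + y3^2 - k3*e3) - (x2*x3 + y2*y3 - (k2*e3 + e2*k3)/2)^2)
        - (x1*x2 + y1*y2 - (k1*e2 + e1*k2)/2) * ((x1*x2 + y1*y2 - (k1*e2 + e1*k2)/2) * (x3^2 + y3^2 - k3*e3) - (x2*x3 + y2*y3 - (k2*e3 + e2*k3)/2) * (x1*x3 + y1*y3 - (k1*e3 + e1*k3)/2))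
        + (x1*x3 + y1*y3 - (k1*e3 + e1*k3)/2) * ((x1*x2 + y1*y2 - (k1*e2 + e1*k2)/2) * (x2*x3 + y2*y3 - (k2*e3 + e2*k3)/2) - (x2^2 + y2^2 - k2*e2) * (x1*x3 + y1*y3 - (k1*e3 + e1*k3)/2)) := by
      rw [hnb, hne, hnx, hny]; ring
    rw [hF1, hF2, hF3, hT12, hT13, hT23] at h
    norm_num at h
    linarith
  have Hdn : dx*nX + dy*nY - (db*nE + de*nB)/2 = 0 := by
    have h : dx*nX + dy*nY - (db*nE + de*nB)/2 = tau - tau/16*(nX^2 + nY^2 - nB*nE) := by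
      rw [hdb, hde, hdx, hdy, htau]; ring
    rw [H16] at h; linarith
  have Hd1 : dx*x1 + dy*y1 - (db*e1 + de*k1)/2 = 0 := by
    have h : dx*x1 + dy*y1 - (db*e1 + de*k1)/2 =
        (X*x1 + Y*y1 - (dl*e1 + ep*k1)/2) - (x1^2 + y1^2 - k1*e1) - (x1*x2 + y1*y2 - (k1*e2 + e1*k2)/2) - (x1*x3 + y1*y3 - (k1*e3 + e1*k3)/2) := by
      rw [hdb, hde, hdx, hdy, htau, hqb, hqe, hqx, hqy, hnb, hne, hnx, hny]; ring
    rw [hL1, hF1, hT12, hT13] at h; linarith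
  have Hd2 : dx*x2 + dy*y2 - (db*e2 + de*k2)/2 = 0 := by
    have h : dx*x2 + dy*y2 - (db*e2 + de*k2)/2 =
        (X*x2 + Y*y2 - (dl*e2 + ep*k2)/2) - (x1*x2 + y1*y2 - (k1*e2 + e1*k2)/2) - (x2^2 + y2^2 - k2*e2) - (x2*x3 + y2*y3 - (k2*e3 + e2*k3)/2) := by
      rw [hdb, hde, hdx, hdy, htau, hqb, hqe, hqx, hqy, hnb, hne, hnx, hny]; ring
    rw [hL2, hT12, hF2, hT23] at h; linarith
  have Hd3 : dx*x3 + dy*y3 - (db*e3 + de*k3)/2 = 0 := by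
    have h : dx*x3 + dy*y3 - (db*e3 + de*k3)/2 =
        (X*x3 + Y*y3 - (dl*e3 + ep*k3)/2) - (x1*x3 + y1*y3 - (k1*e3 + e1*k3)/2) - (x2*x3 + y2*y3 - (k2*e3 + e2*k3)/2) - (x3^2 + y3^2 - k3*e3) := by
      rw [hdb, hde, hdx, hdy, htau, hqb, hqe, hqx, hqy, hnb, hne, hnx, hny]; ring
    rw [hL3, hT13, hT23, hF3] at h; linarith
  have Mb := magic_b k1 e1 x1 y1 k2 e2 x2 y2 k3 e3 x3 y3 nB nE nX nY db de dx dy hnb hne hnx hny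
  have Me := magic_e k1 e1 x1 y1 k2 e2 x2 y2 k3 e3 x3 y3 nB nE nX nY db de dx dy hnb hne hnx hny
  have Mx := magic_x k1 e1 x1 y1 k2 e2 x2 y2 k3 e3 x3 y3 nB nE nX nY db de dx dy hnb hne hnx hny
  have My := magic_y k1 e1 x1 y1 k2 e2 x2 y2 k3 e3 x3 y3 nB nE nX nY db de dx dy hnb hne hnx hny
  rw [H16, Hdn, Hd1, Hd2, Hd3] at Mb Me Mx My
  simp only [zero_mul, mul_zero, add_zero, zero_add, sub_zero] at Mb Me Mx My
  have hdb0 : db = 0 := by linarith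
  have hde0 : de = 0 := by linarith
  have hdx0 : dx = 0 := by linarith
  have hdy0 : dy = 0 := by linarith
  have hq_b : qb = tau/16 * nB := by rw [hdb] at hdb0; linarith
  have hq_e : qe = tau/16 * nE := by rw [hde] at hde0; linarith
  have hq_x : qx = tau/16 * nX := by rw [hdx] at hdx0; linarith
  have hq_y : qy = tau/16 * nY := by rw [hdy] at hdy0; linarith
  have Hqq : qx^2 + qy^2 - qb*qe = 4 := by
    have h : qx^2 + qy^2 - qb*qe =
        (X^2 + Y^2 - dl*ep) - 2*((X*x1 + Y*y1 - (dl*e1 + ep*k1)/2) + (X*x2 + Y*y2 - (dl*e2 + ep*k2)/2) + (X*x3 + Y*y3 - (dl*e3 + ep*k3)/2))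
        + ((x1^2 + y1^2 - k1*e1) + (x2^2 + y2^2 - k2*e2) + (x3^2 + y3^2 - k3*e3)) + 2*((x1*x2 + y1*y2 - (k1*e2 + e1*k2)/2) + (x1*x3 + y1*y3 - (k1*e3 + e1*k3)/2) + (x2*x3 + y2*y3 - (k2*e3 + e2*k3)/2)) := by
      rw [hqb, hqe, hqx, hqy]; ring
    rw [hFv, hL1, hL2, hL3, hF1, hF2, hF3, hT12, hT13, hT23] at h; linarith
  have htau2 : tau^2 = 64 := by
    rw [hq_b, hq_e, hq_x, hq_y] at Hqq
    have h5 : (tau/16)^2 * (nX^2 + nY^2 - nB*nE) = 4 := by linear_combination Hqq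
    rw [H16] at h5
    linear_combination 16 * h5
  have h88 : (tau - 8) * (tau + 8) = 0 := by linear_combination htau2
  rcases mul_eq_zero.mp h88 with h8 | h8
  · have h8' : tau = 8 := by linarith
    rw [h8', hnb] at hq_b
    rw [h8', hne] at hq_e
    rw [h8', hnx] at hq_x
    rw [h8', hny] at hq_y
    rw [hqb] at hq_b
    rw [hqe] at hq_e
    rw [hqx] at hq_x
    rw [hqy] at hq_y
    exact ⟨1, Or.inl rfl, by linear_combination hq_b, by linear_combination hq_e,
      by linear_combination hq_x, by linear_combination hq_y⟩
  · have h8' : tau = -8 := by linarith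
    rw [h8', hnb] at hq_b
    rw [h8', hne] at hq_e
    rw [h8', hnx] at hq_x
    rw [h8', hny] at hq_y
    rw [hqb] at hq_b
    rw [hqe] at hq_e
    rw [hqx] at hq_x
    rw [hqy] at hq_y
    exact ⟨-1, Or.inr rfl, by linear_combination hq_b, by linear_combination hq_e,
      by linear_combination hq_x, by linear_combination hq_y⟩

def Good (c : PCircle) : Prop :=
  ∃ k e mx my : ℤ, (k : ℝ) * c.radius = 1 ∧
    c.center.re = c.radius * mx ∧ c.center.im = c.radius * my ∧
    (e : ℝ) * c.radius = c.center.re ^ 2 + c.center.im ^ 2 - c.radius ^ 2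

private lemma fill_good {G1 G2 G3 D : PCircle} {p1 p2 p3 : ℂ}
    (hg1 : Good G1) (hg2 : Good G2) (hg3 : Good G3)
    (t12 : Tangent G1 G2) (t13 : Tangent G1 G3) (t23 : Tangent G2 G3)
    (hp12 : p1 ≠ p2) (hp13 : p1 ≠ p3) (hp23 : p2 ≠ p3)
    (ta1 : TangentAt D G1 p1) (ta2 : TangentAt D G2 p2) (ta3 : TangentAt D G3 p3) :
    Good D := by
  obtain ⟨K1, E1, MX1, MY1, hk1, hx1, hy1, he1⟩ := hg1
  obtain ⟨K2, E2, MX2, MY2, hk2, hx2, hy2, he2⟩ := hg2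
  obtain ⟨K3, E3, MX3, MY3, hk3, hx3, hy3, he3⟩ := hg3
  have hrD := D.radius_pos
  have hrDne : D.radius ≠ 0 := ne_of_gt hrD
  obtain ⟨dl, hdl⟩ : ∃ a : ℝ, a * D.radius = 1 := ⟨1 / D.radius, by field_simp⟩
  obtain ⟨Xv, hXv⟩ : ∃ a : ℝ, a * D.radius = D.center.re :=
    ⟨D.center.re / D.radius, by field_simp⟩
  obtain ⟨Yv, hYv⟩ : ∃ a : ℝ, a * D.radius = D.center.im :=
    ⟨D.center.im / D.radius, by field_simp⟩
  obtain ⟨ep, hep⟩ : ∃ a : ℝ, a * D.radius = D.center.re ^ 2 + D.center.im ^ 2 - D.radius ^ 2 :=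
    ⟨(D.center.re ^ 2 + D.center.im ^ 2 - D.radius ^ 2) / D.radius, by field_simp⟩
  obtain ⟨s1, hs1, hne1, hE1, hQ1⟩ := tangentAt_data ta1
  obtain ⟨s2, hs2, hne2, hE2, hQ2⟩ := tangentAt_data ta2
  obtain ⟨s3, hs3, hne3, hE3, hQ3⟩ := tangentAt_data ta3
  have hFv : Xv ^ 2 + Yv ^ 2 - dl * ep = 1 := by
    have h2 : (Xv ^ 2 + Yv ^ 2 - dl * ep) * D.radius ^ 2 = 1 * D.radius ^ 2 := by
      linear_combination (Xv * D.radius + D.center.re) * hXv +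
        (Yv * D.radius + D.center.im) * hYv - (ep * D.radius) * hdl - hep
    exact mul_right_cancel₀ (pow_ne_zero 2 hrDne) h2
  obtain ⟨hF1', hL1'⟩ := normalize_i hs1 hk1 hx1 hy1 he1 hdl hXv hYv hep hQ1
  obtain ⟨hF2', hL2'⟩ := normalize_i hs2 hk2 hx2 hy2 he2 hdl hXv hYv hep hQ2
  obtain ⟨hF3', hL3'⟩ := normalize_i hs3 hk3 hx3 hy3 he3 hdl hXv hYv hep hQ3
  have hB12 := pair_data hk1 hx1 hy1 he1 hk2 hx2 hy2 he2 t12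
  have hB13 := pair_data hk1 hx1 hy1 he1 hk3 hx3 hy3 he3 t13
  have hB23 := pair_data hk2 hx2 hy2 he2 hk3 hx3 hy3 he3 t23
  have hT12 := pair_orient hs1 hs2 hdl hXv hYv hk1 hx1 hy1 hk2 hx2 hy2 hFv hF1' hF2'
    hL1' hL2' hB12 hne1 hne2 hE1 hE2 hp12
  have hT13 := pair_orient hs1 hs3 hdl hXv hYv hk1 hx1 hy1 hk3 hx3 hy3 hFv hF1' hF3'
    hL1' hL3' hB13 hne1 hne3 hE1 hE3 hp13
  have hT23 := pair_orient hs2 hs3 hdl hXv hYv hk2 hx2 hy2 hk3 hx3 hy3 hFv hF2' hF3'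
    hL2' hL3' hB23 hne2 hne3 hE2 hE3 hp23
  obtain ⟨t, ht, hdl', hep', hX', hY'⟩ := core (s1 * (K1 : ℝ)) (s1 * (E1 : ℝ))
    (s1 * (MX1 : ℝ)) (s1 * (MY1 : ℝ)) (s2 * (K2 : ℝ)) (s2 * (E2 : ℝ)) (s2 * (MX2 : ℝ))
    (s2 * (MY2 : ℝ)) (s3 * (K3 : ℝ)) (s3 * (E3 : ℝ)) (s3 * (MX3 : ℝ)) (s3 * (MY3 : ℝ))
    dl ep Xv Yv hF1' hF2' hF3' hFv hL1' hL2' hL3' hT12 hT13 hT23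
  have exs : ∀ s : ℝ, s ^ 2 = 1 → ∃ T : ℤ, (T : ℝ) = s := by
    intro s hs
    have h : (s - 1) * (s + 1) = 0 := by linear_combination hs
    rcases mul_eq_zero.mp h with h | h
    · exact ⟨1, by push_cast; linarith⟩
    · exact ⟨-1, by push_cast; linarith⟩
  obtain ⟨T1, hTs1⟩ := exs s1 hs1
  obtain ⟨T2, hTs2⟩ := exs s2 hs2
  obtain ⟨T3, hTs3⟩ := exs s3 hs3
  obtain ⟨Tt, hTt⟩ : ∃ T : ℤ, (T : ℝ) = t := by
    rcases ht with h | h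
    · exact ⟨1, by rw [h]; norm_num⟩
    · exact ⟨-1, by rw [h]; norm_num⟩
  -- primed integers
  obtain ⟨A1, hA1⟩ : ∃ a : ℤ, a = T1 * K1 := ⟨_, rfl⟩
  obtain ⟨B1, hB1⟩ : ∃ a : ℤ, a = T1 * E1 := ⟨_, rfl⟩
  obtain ⟨C1, hC1⟩ : ∃ a : ℤ, a = T1 * MX1 := ⟨_, rfl⟩
  obtain ⟨F1, hF1z⟩ : ∃ a : ℤ, a = T1 * MY1 := ⟨_, rfl⟩
  obtain ⟨A2, hA2⟩ : ∃ a : ℤ, a = T2 * K2 := ⟨_, rfl⟩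
  obtain ⟨B2, hB2⟩ : ∃ a : ℤ, a = T2 * E2 := ⟨_, rfl⟩
  obtain ⟨C2, hC2⟩ : ∃ a : ℤ, a = T2 * MX2 := ⟨_, rfl⟩
  obtain ⟨F2, hF2z⟩ : ∃ a : ℤ, a = T2 * MY2 := ⟨_, rfl⟩
  obtain ⟨A3, hA3⟩ : ∃ a : ℤ, a = T3 * K3 := ⟨_, rfl⟩
  obtain ⟨B3, hB3⟩ : ∃ a : ℤ, a = T3 * E3 := ⟨_, rfl⟩
  obtain ⟨C3, hC3⟩ : ∃ a : ℤ, a = T3 * MX3 := ⟨_, rfl⟩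
  obtain ⟨F3, hF3z⟩ : ∃ a : ℤ, a = T3 * MY3 := ⟨_, rfl⟩
  -- cast equalities for primed integers
  have cA1 : (A1 : ℝ) = s1 * (K1 : ℝ) := by rw [hA1]; push_cast; rw [hTs1]
  have cB1 : (B1 : ℝ) = s1 * (E1 : ℝ) := by rw [hB1]; push_cast; rw [hTs1]
  have cC1 : (C1 : ℝ) = s1 * (MX1 : ℝ) := by rw [hC1]; push_cast; rw [hTs1]
  have cF1 : (F1 : ℝ) = s1 * (MY1 : ℝ) := by rw [hF1z]; push_cast; rw [hTs1]
  have cA2 : (A2 : ℝ) = s2 * (K2 : ℝ) := by rw [hA2]; push_cast; rw [hTs2]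
  have cB2 : (B2 : ℝ) = s2 * (E2 : ℝ) := by rw [hB2]; push_cast; rw [hTs2]
  have cC2 : (C2 : ℝ) = s2 * (MX2 : ℝ) := by rw [hC2]; push_cast; rw [hTs2]
  have cF2 : (F2 : ℝ) = s2 * (MY2 : ℝ) := by rw [hF2z]; push_cast; rw [hTs2]
  have cA3 : (A3 : ℝ) = s3 * (K3 : ℝ) := by rw [hA3]; push_cast; rw [hTs3]
  have cB3 : (B3 : ℝ) = s3 * (E3 : ℝ) := by rw [hB3]; push_cast; rw [hTs3]
  have cC3 : (C3 : ℝ) = s3 * (MX3 : ℝ) := by rw [hC3]; push_cast; rw [hTs3]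
  have cF3 : (F3 : ℝ) = s3 * (MY3 : ℝ) := by rw [hF3z]; push_cast; rw [hTs3]
  -- integer pair relations
  have hZ12R : 2 * ((A1 : ℝ) * C2 * 0 + 1) = 2 * (0 + 1) := by norm_num
  have hz12 : A1 * B2 + B1 * A2 = 2 * (C1 * C2 + F1 * F2 + 1) := by
    have hr : 2 * ((C1 : ℝ) * C2 + (F1 : ℝ) * F2) - ((A1 : ℝ) * B2 + (B1 : ℝ) * A2) = -2 := by
      rw [cA1, cB1, cC1, cF1, cA2, cB2, cC2, cF2]
      linear_combination 2 * hT12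
    have hzi : 2 * (C1 * C2 + F1 * F2) - (A1 * B2 + B1 * A2) = -2 := by exact_mod_cast hr
    linarith
  have hz13 : A1 * B3 + B1 * A3 = 2 * (C1 * C3 + F1 * F3 + 1) := by
    have hr : 2 * ((C1 : ℝ) * C3 + (F1 : ℝ) * F3) - ((A1 : ℝ) * B3 + (B1 : ℝ) * A3) = -2 := by
      rw [cA1, cB1, cC1, cF1, cA3, cB3, cC3, cF3]
      linear_combination 2 * hT13
    have hzi : 2 * (C1 * C3 + F1 * F3) - (A1 * B3 + B1 * A3) = -2 := by exact_mod_cast hr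
    linarith
  have hz23 : A2 * B3 + B2 * A3 = 2 * (C2 * C3 + F2 * F3 + 1) := by
    have hr : 2 * ((C2 : ℝ) * C3 + (F2 : ℝ) * F3) - ((A2 : ℝ) * B3 + (B2 : ℝ) * A3) = -2 := by
      rw [cA2, cB2, cC2, cF2, cA3, cB3, cC3, cF3]
      linear_combination 2 * hT23
    have hzi : 2 * (C2 * C3 + F2 * F3) - (A2 * B3 + B2 * A3) = -2 := by exact_mod_cast hr
    linarith
  -- integer target values
  obtain ⟨NDL, hNDLd⟩ : ∃ a : ℤ, a = A1 + A2 + A3 +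
      Tt * (A1 * (C2 * F3 - F2 * C3) - C1 * (A2 * F3 - F2 * A3) + F1 * (A2 * C3 - C2 * A3)) :=
    ⟨_, rfl⟩
  obtain ⟨NE, hNEd⟩ : ∃ a : ℤ, a = B1 + B2 + B3 -
      Tt * (B1 * (C2 * F3 - F2 * C3) - C1 * (B2 * F3 - F2 * B3) + F1 * (B2 * C3 - C2 * B3)) :=
    ⟨_, rfl⟩
  obtain ⟨CY, hCYd⟩ : ∃ a : ℤ, a = F3 * (C1 * C2 + F1 * F2 + 1 - A2 * B1) -
      F2 * (C1 * C3 + F1 * F3 + 1 - A3 * B1) + F1 * (C2 * C3 + F2 * F3 + 1 - A3 * B2) :=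
    ⟨_, rfl⟩
  obtain ⟨CX, hCXd⟩ : ∃ a : ℤ, a = C3 * (C1 * C2 + F1 * F2 + 1 - A2 * B1) -
      C2 * (C1 * C3 + F1 * F3 + 1 - A3 * B1) + C1 * (C2 * C3 + F2 * F3 + 1 - A3 * B2) :=
    ⟨_, rfl⟩
  obtain ⟨NX, hNXd⟩ : ∃ a : ℤ, a = C1 + C2 + C3 + Tt * CY := ⟨_, rfl⟩
  obtain ⟨NY, hNYd⟩ : ∃ a : ℤ, a = F1 + F2 + F3 - Tt * CX := ⟨_, rfl⟩
  have hDKEY : A1 * (B2 * F3 - F2 * B3) - B1 * (A2 * F3 - F2 * A3) + F1 * (A2 * B3 - B2 * A3) =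
      2 * CY := by
    rw [hCYd]; linear_combination F3 * hz12 - F2 * hz13 + F1 * hz23
  have hDKEX : A1 * (B2 * C3 - C2 * B3) - B1 * (A2 * C3 - C2 * A3) + C1 * (A2 * B3 - B2 * A3) =
      2 * CX := by
    rw [hCXd]; linear_combination C3 * hz12 - C2 * hz13 + C1 * hz23
  -- real versions of det identities
  have hDKEYr : (s1 * (K1:ℝ)) * ((s2 * (E2:ℝ)) * (s3 * (MY3:ℝ)) - (s2 * (MY2:ℝ)) * (s3 * (E3:ℝ))) -
      (s1 * (E1:ℝ)) * ((s2 * (K2:ℝ)) * (s3 * (MY3:ℝ)) - (s2 * (MY2:ℝ)) * (s3 * (K3:ℝ))) +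
      (s1 * (MY1:ℝ)) * ((s2 * (K2:ℝ)) * (s3 * (E3:ℝ)) - (s2 * (E2:ℝ)) * (s3 * (K3:ℝ))) =
      2 * (CY : ℝ) := by
    rw [← cA1, ← cB1, ← cF1, ← cA2, ← cB2, ← cF2, ← cA3, ← cB3, ← cF3]
    exact_mod_cast hDKEY
  have hDKEXr : (s1 * (K1:ℝ)) * ((s2 * (E2:ℝ)) * (s3 * (MX3:ℝ)) - (s2 * (MX2:ℝ)) * (s3 * (E3:ℝ))) -
      (s1 * (E1:ℝ)) * ((s2 * (K2:ℝ)) * (s3 * (MX3:ℝ)) - (s2 * (MX2:ℝ)) * (s3 * (K3:ℝ))) +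
      (s1 * (MX1:ℝ)) * ((s2 * (K2:ℝ)) * (s3 * (E3:ℝ)) - (s2 * (E2:ℝ)) * (s3 * (K3:ℝ))) =
      2 * (CX : ℝ) := by
    rw [← cA1, ← cB1, ← cC1, ← cA2, ← cB2, ← cC2, ← cA3, ← cB3, ← cC3]
    exact_mod_cast hDKEX
  -- cast equalities for the four target integers
  have hNDL : (NDL : ℝ) = dl := by
    rw [hNDLd]; push_cast
    rw [← cA1, ← cC1, ← cF1, ← cA2, ← cC2, ← cF2, ← cA3, ← cC3, ← cF3] at hdl'
    rw [hTt]
    linear_combination -hdl'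
  have hNE : (NE : ℝ) = ep := by
    rw [hNEd]; push_cast
    rw [← cB1, ← cC1, ← cF1, ← cB2, ← cC2, ← cF2, ← cB3, ← cC3, ← cF3] at hep'
    rw [hTt]
    linear_combination -hep'
  have hNX : (NX : ℝ) = Xv := by
    rw [hNXd]; push_cast
    rw [hTt]
    rw [← cC1, ← cC2, ← cC3] at hX'
    linear_combination -hX' - t / 2 * hDKEYr
  have hNY : (NY : ℝ) = Yv := by
    rw [hNYd]; push_cast
    rw [hTt]
    rw [← cF1, ← cF2, ← cF3] at hY'
    linear_combination -hY' + t / 2 * hDKEXr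
  refine ⟨NDL, NE, NX, NY, ?_, ?_, ?_, ?_⟩
  · rw [hNDL]; exact hdl
  · rw [hNX]; linear_combination -hXv
  · rw [hNY]; linear_combination -hYv
  · rw [hNE]; exact hep

private lemma dist_helper (z w : ℂ) (d : ℝ) (hd : 0 ≤ d)
    (h : (z.re - w.re) ^ 2 + (z.im - w.im) ^ 2 = d ^ 2) : dist z w = d := by
  rw [Complex.dist_eq, Complex.norm_def,
    show Complex.normSq (z - w) = d ^ 2 by
      rw [Complex.normSq_apply, Complex.sub_re, Complex.sub_im]; linear_combination h,
    show d ^ 2 = d * d by ring]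
  exact Real.sqrt_mul_self hd

noncomputable def myC0 : PCircle := ⟨⟨0, 0⟩, 1, one_pos⟩
noncomputable def myC1 : PCircle := ⟨⟨-(1/2), 0⟩, 1/2, by norm_num⟩
noncomputable def myC2 : PCircle := ⟨⟨1/2, 0⟩, 1/2, by norm_num⟩
noncomputable def myC3 : PCircle := ⟨⟨0, 2/3⟩, 1/3, by norm_num⟩

noncomputable def myD : DescartesConfig where
  C0 := myC0
  C1 := myC1
  C2 := myC2
  C3 := myC3
  h12 := by
    show dist myC1.center myC2.center = myC1.radius + myC2.radius
    simp only [myC1, myC2]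
    exact dist_helper _ _ _ (by norm_num) (by norm_num)
  h13 := by
    show dist myC1.center myC3.center = myC1.radius + myC3.radius
    simp only [myC1, myC3]
    exact dist_helper _ _ _ (by norm_num) (by norm_num)
  h23 := by
    show dist myC2.center myC3.center = myC2.radius + myC3.radius
    simp only [myC2, myC3]
    exact dist_helper _ _ _ (by norm_num) (by norm_num)
  h10 := by
    refine ⟨by norm_num [myC1, myC0], ?_⟩
    show dist myC1.center myC0.center = myC0.radius - myC1.radius
    simp only [myC1, myC0]
    exact dist_helper _ _ _ (by norm_num) (by norm_num)
  h20 := by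
    refine ⟨by norm_num [myC2, myC0], ?_⟩
    show dist myC2.center myC0.center = myC0.radius - myC2.radius
    simp only [myC2, myC0]
    exact dist_helper _ _ _ (by norm_num) (by norm_num)
  h30 := by
    refine ⟨by norm_num [myC3, myC0], ?_⟩
    show dist myC3.center myC0.center = myC0.radius - myC3.radius
    simp only [myC3, myC0]
    exact dist_helper _ _ _ (by norm_num) (by norm_num)

private lemma good0 : Good myC0 := ⟨1, -1, 0, 0, by norm_num [myC0], by norm_num [myC0],
  by norm_num [myC0], by norm_num [myC0]⟩
private lemma good1 : Good myC1 := ⟨2, 0, -1, 0, by norm_num [myC1], by norm_num [myC1],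
  by norm_num [myC1], by norm_num [myC1]⟩
private lemma good2 : Good myC2 := ⟨2, 0, 1, 0, by norm_num [myC2], by norm_num [myC2],
  by norm_num [myC2], by norm_num [myC2]⟩
private lemma good3 : Good myC3 := ⟨3, 1, 0, 2, by norm_num [myC3], by norm_num [myC3],
  by norm_num [myC3], by norm_num [myC3]⟩


/-- There exists a Descartes configuration whose generated Apollonian gasket
consists entirely of circles with integer signed curvature. -/
theorem exists_integral_apollonian_gasket :
    ∃ D : DescartesConfig, ∀ c : PCircle, InGasket D c → ∃ k : ℤ, signedCurv D c = k := by
  refine ⟨myD, ?_⟩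
  have main : ∀ c : PCircle, InGasket myD c → Good c := by
    intro c hc
    induction hc with
    | base0 => exact good0
    | base1 => exact good1
    | base2 => exact good2
    | base3 => exact good3
    | fill a b c' C q1 q2 q3 ha hb hc' tab tac tbc h12 h13 h23 tCa tCb tCc iha ihb ihc =>
        exact fill_good iha ihb ihc tab tac tbc h12 h13 h23 tCa tCb tCc
  intro c hc
  obtain ⟨k, e, mx, my, hk, _, _, _⟩ := main c hc
  have hrne : c.radius ≠ 0 := ne_of_gt c.radius_pos
  have hinv : (1 : ℝ) / c.radius = (k : ℝ) := by
    rw [div_eq_iff hrne]; linarith [hk]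
  by_cases h : c = myD.C0
  · refine ⟨-k, ?_⟩
    rw [signedCurv, if_pos h, hinv]
    push_cast; ring
  · exact ⟨k, by rw [signedCurv, if_neg h, hinv]⟩
end

section
/- Let 0 < θ₁ < θ₂ < 2π. Then there exists a unique Descartes configuration (C₀, C₁, C₂, C₃) in the complex plane such that C₀ is the unit circle {z ∈ ℂ : |z| = 1}, C₁ is internally tangent to C₀ at the point 1 = e^{0·i}, C₂ is internally tangent to C₀ at e^{iθ₁}, and C₃ is internally tangent to C₀ at e^{iθ₂}. -/
section Auxiliary

open Complex

lemma pcircle_ext {c d : PCircle} (h1 : c.center = d.center)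
    (h2 : c.radius = d.radius) : c = d := by
  cases c; cases d; simp only at h1 h2; subst h1; subst h2; rfl

lemma dconfig_ext {D D' : DescartesConfig} (h0 : D.C0 = D'.C0) (h1 : D.C1 = D'.C1)
    (h2 : D.C2 = D'.C2) (h3 : D.C3 = D'.C3) : D = D' := by
  cases D; cases D'; simp only at h0 h1 h2 h3; subst h0; subst h1; subst h2; subst h3; rfl

/-- Characterization of internal tangency to the unit circle at a point `p`. -/
lemma intTangentAt_unit_iff {C0 : PCircle} (h0c : C0.center = 0) (h0r : C0.radius = 1)
    (c : PCircle) (p : ℂ) (hp : ‖p‖ = 1) :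
    IntTangentAt c C0 p ↔ c.radius < 1 ∧ c.center = (1 - (c.radius : ℂ)) * p := by
  have hnp : normSq p = 1 := by rw [← Complex.sq_norm, hp]; norm_num
  constructor
  · rintro ⟨⟨hlt, hdist⟩, hpc, -⟩
    rw [h0r] at hlt
    rw [h0c, h0r, Complex.dist_eq, sub_zero] at hdist
    refine ⟨hlt, ?_⟩
    have hpc' : ‖p - c.center‖ = c.radius := by
      rw [PCircle.toSet, mem_sphere_iff_norm] at hpc
      simpa using hpc
    set r := c.radius with hr
    set z := c.center with hz
    have h1 : normSq (p - z) = r ^ 2 := by rw [← Complex.sq_norm, hpc']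
    have h2 : normSq z = (1 - r) ^ 2 := by rw [← Complex.sq_norm, hdist]
    have h3 : normSq (p - z) = normSq p + normSq z - 2 * (p * (starRingEnd ℂ) z).re :=
      Complex.normSq_sub p z
    have hre : (p * (starRingEnd ℂ) z).re = 1 - r := by
      rw [h1, hnp, h2] at h3; nlinarith
    have habs : normSq (p * (starRingEnd ℂ) z) = (1 - r) ^ 2 := by
      rw [Complex.normSq_mul, Complex.normSq_conj, hnp, h2]; ring
    have him : (p * (starRingEnd ℂ) z).im = 0 := by
      have := Complex.normSq_apply (p * (starRingEnd ℂ) z)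
      rw [habs, hre] at this
      nlinarith [this]
    have hw : p * (starRingEnd ℂ) z = ((1 - r : ℝ) : ℂ) := by
      apply Complex.ext <;> simp [hre, him]
    have h4 : (starRingEnd ℂ) p * (p * (starRingEnd ℂ) z) = (starRingEnd ℂ) p * ((1 - r : ℝ) : ℂ) :=
      congrArg _ hw
    have h5 : (starRingEnd ℂ) p * p = 1 := by
      rw [← Complex.normSq_eq_conj_mul_self, hnp]; norm_num
    rw [← mul_assoc, h5, one_mul] at h4
    have h6 := congrArg (starRingEnd ℂ) h4
    have h7 : z = p - p * (c.radius : ℂ) := by simpa [mul_comm, sub_mul] using h6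
    linear_combination h7
  · rintro ⟨hlt, hcen⟩
    have hr0 := c.radius_pos
    have habs : ‖(1 - (c.radius : ℂ))‖ = 1 - c.radius := by
      rw [show (1 - (c.radius : ℂ)) = ((1 - c.radius : ℝ) : ℂ) by push_cast; ring,
        Complex.norm_real, Real.norm_eq_abs, abs_of_pos (by linarith)]
    refine ⟨⟨by rw [h0r]; exact hlt, ?_⟩, ?_, ?_⟩
    · rw [h0c, h0r, Complex.dist_eq, sub_zero, hcen, norm_mul, habs, hp, mul_one]
    · rw [PCircle.toSet, mem_sphere_iff_norm, hcen]
      have : p - (1 - (c.radius : ℂ)) * p = (c.radius : ℂ) * p := by ring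
      rw [this]
      simp [map_mul, hp, abs_of_pos hr0]
    · rw [PCircle.toSet, mem_sphere_iff_norm, h0c, h0r, sub_zero]
      simpa using hp

/-- Characterization of external tangency of two circles inscribed in the unit circle. -/
lemma extTangent_iff {p q : ℂ} (hp : ‖p‖ = 1) (hq : ‖q‖ = 1)
    {c d : PCircle} (hc : c.center = (1 - (c.radius : ℂ)) * p)
    (hd : d.center = (1 - (d.radius : ℂ)) * q) :
    ExtTangent c d ↔
      4 * c.radius * d.radius = normSq (p - q) * (1 - c.radius) * (1 - d.radius) := by
  have hnp : normSq p = 1 := by rw [← Complex.sq_norm, hp]; norm_num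
  have hnq : normSq q = 1 := by rw [← Complex.sq_norm, hq]; norm_num
  set r := c.radius
  set s := d.radius
  have hr0 := c.radius_pos
  have hs0 := d.radius_pos
  set x := (p * (starRingEnd ℂ) q).re with hx
  have key : ∀ (a b : ℝ), normSq ((a:ℂ)*p - (b:ℂ)*q)
      = a^2 * normSq p + b^2 * normSq q - 2*a*b*x := by
    intro a b
    simp only [Complex.normSq_apply, Complex.sub_re, Complex.sub_im, Complex.mul_re,
      Complex.mul_im, Complex.conj_re, Complex.conj_im, Complex.ofReal_re, Complex.ofReal_im, hx]
    ring
  have hpq : normSq (p - q) = 2 - 2 * x := by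
    have h' : normSq (p - q) = 1 + 1 - 2 * x := by simpa [hnp, hnq] using key 1 1
    rw [h']; ring
  have hdist : dist c.center d.center = ‖((((1-r:ℝ)):ℂ) * p - (((1-s:ℝ)):ℂ) * q)‖ := by
    rw [Complex.dist_eq, hc, hd]; push_cast; ring_nf
  have hns : normSq ((((1-r:ℝ)):ℂ) * p - (((1-s:ℝ)):ℂ) * q)
      = (1-r)^2 + (1-s)^2 - 2*(1-r)*(1-s)*x := by
    rw [key (1-r) (1-s), hnp, hnq]; ring
  constructor
  · intro h
    rw [ExtTangent, hdist] at h
    have h2 : normSq ((((1-r:ℝ)):ℂ) * p - (((1-s:ℝ)):ℂ) * q) = (r + s)^2 := by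
      rw [← Complex.sq_norm, h]
    rw [hns] at h2
    rw [hpq]
    linear_combination -h2
  · intro h
    rw [hpq] at h
    rw [ExtTangent, hdist]
    have h2 : ‖((((1-r:ℝ)):ℂ) * p - (((1-s:ℝ)):ℂ) * q)‖ ^ 2 = (r + s)^2 := by
      rw [Complex.sq_norm, hns]; linear_combination -h
    have := norm_nonneg ((((1-r:ℝ)):ℂ) * p - (((1-s:ℝ)):ℂ) * q)
    nlinarith [h2]

lemma sq_eq_of_pos {a b : ℝ} (ha : 0 < a) (hb : 0 < b) (h : a ^ 2 = b ^ 2) : a = b := by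
  have h0 : (a - b) * (a + b) = 0 := by linear_combination h
  rcases mul_eq_zero.mp h0 with h' | h' <;> linarith

/-- Uniqueness for the product system `u i * u j = e i j`. -/
lemma sys_unique {e12 e13 e23 u1 u2 u3 v1 v2 v3 : ℝ}
    (he23 : 0 < e23)
    (hu1 : 0 < u1) (hv1 : 0 < v1)
    (h12 : u1 * u2 = e12) (h13 : u1 * u3 = e13) (h23 : u2 * u3 = e23)
    (k12 : v1 * v2 = e12) (k13 : v1 * v3 = e13) (k23 : v2 * v3 = e23) :
    u1 = v1 ∧ u2 = v2 ∧ u3 = v3 := by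
  have hu : u1 ^ 2 * e23 = e12 * e13 := by rw [← h12, ← h13, ← h23]; ring
  have hv : v1 ^ 2 * e23 = e12 * e13 := by rw [← k12, ← k13, ← k23]; ring
  have h1 : u1 = v1 := by
    apply sq_eq_of_pos hu1 hv1
    exact mul_right_cancel₀ (ne_of_gt he23) (hu.trans hv.symm)
  have h2 : u2 = v2 := by
    have : u1 * u2 = u1 * v2 := by rw [h12, ← k12, h1]
    exact mul_left_cancel₀ (ne_of_gt hu1) this
  have h3 : u3 = v3 := by
    have : u1 * u3 = u1 * v3 := by rw [h13, ← k13, h1]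
    exact mul_left_cancel₀ (ne_of_gt hu1) this
  exact ⟨h1, h2, h3⟩

lemma radius_eq_to_u {r s e : ℝ} (hr1 : r < 1) (hs1 : s < 1)
    (h : 4 * r * s = e * (1 - r) * (1 - s)) :
    (r / (1 - r)) * (s / (1 - s)) = e / 4 := by
  have h1 : (1:ℝ) - r ≠ 0 := by linarith
  have h2 : (1:ℝ) - s ≠ 0 := by linarith
  field_simp
  linarith [h]

lemma u_to_r_inj {r s : ℝ} (hr1 : r < 1) (hs1 : s < 1)
    (h : r / (1 - r) = s / (1 - s)) : r = s := by
  have h1 : (1:ℝ) - r ≠ 0 := by linarith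
  have h2 : (1:ℝ) - s ≠ 0 := by linarith
  field_simp at h
  nlinarith [h]

lemma exp_ne_exp_of_angle {θ θ' : ℝ} (h : θ < θ') (h2 : θ' - θ < 2 * Real.pi) :
    Complex.exp (θ * I) ≠ Complex.exp (θ' * I) := by
  intro hE
  rw [Complex.exp_eq_exp_iff_exists_int] at hE
  obtain ⟨n, hn⟩ := hE
  have hI : (θ : ℂ) = θ' + n * (2 * Real.pi) := by
    have : ((θ : ℂ)) * I = (θ' + n * (2 * Real.pi)) * I := by rw [hn]; ring
    exact mul_right_cancel₀ Complex.I_ne_zero this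
  have hR : θ = θ' + n * (2 * Real.pi) := by exact_mod_cast hI
  have hpi := Real.pi_pos
  have hn0 : (n : ℝ) < 0 := by nlinarith
  have hn1 : (-1 : ℝ) < (n : ℝ) := by nlinarith
  have hz0 : (n : ℤ) < 0 := by exact_mod_cast hn0
  have hz1 : (-1 : ℤ) < n := by exact_mod_cast hn1
  omega

lemma sqrt_sys {a b c : ℝ} (ha : 0 < a) (hb : 0 < b) (hc : 0 < c) :
    Real.sqrt (a * b / (4 * c)) * Real.sqrt (a * c / (4 * b)) = a / 4 := by
  rw [← Real.sqrt_mul (by positivity)]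
  have h : a * b / (4 * c) * (a * c / (4 * b)) = (a / 4) ^ 2 := by
    field_simp
  rw [h, Real.sqrt_sq (by positivity)]

lemma ratio_u {u : ℝ} (hu : 0 < u) : (u / (1 + u)) / (1 - u / (1 + u)) = u := by
  have h1 : (1:ℝ) + u ≠ 0 := by linarith
  rw [show (1:ℝ) - u / (1 + u) = 1 / (1 + u) by field_simp; ring]
  field_simp

lemma build_eq {u v e : ℝ} (hu : 0 < u) (hv : 0 < v) (h : u * v = e / 4) :
    4 * (u / (1 + u)) * (v / (1 + v))
      = e * (1 - u / (1 + u)) * (1 - v / (1 + v)) := by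
  have h1 : (1:ℝ) + u ≠ 0 := by linarith
  have h2 : (1:ℝ) + v ≠ 0 := by linarith
  field_simp
  linear_combination 4 * h

end Auxiliary

/-- For `0 < θ₁ < θ₂ < 2π` there is a unique Descartes configuration whose
bounding circle is the unit circle, with `C₁` internally tangent to `C₀` at
`1`, `C₂` at `e^{iθ₁}`, and `C₃` at `e^{iθ₂}`. -/
theorem existsUnique_descartesConfig_of_tangency_points
    (θ₁ θ₂ : ℝ) (h₀ : 0 < θ₁) (h₁ : θ₁ < θ₂) (h₂ : θ₂ < 2 * Real.pi) :
    ∃! D : DescartesConfig,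
      D.C0.center = 0 ∧ D.C0.radius = 1 ∧
      IntTangentAt D.C1 D.C0 1 ∧
      IntTangentAt D.C2 D.C0 (Complex.exp (θ₁ * Complex.I)) ∧
      IntTangentAt D.C3 D.C0 (Complex.exp (θ₂ * Complex.I)) := by
  classical
  have hpi := Real.pi_pos
  set p1 : ℂ := 1 with hp1def
  set p2 : ℂ := Complex.exp (θ₁ * Complex.I) with hp2def
  set p3 : ℂ := Complex.exp (θ₂ * Complex.I) with hp3def
  have hp1 : ‖p1‖ = 1 := by simp [hp1def]
  have hp2 : ‖p2‖ = 1 := by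
    rw [hp2def]; exact Complex.norm_exp_ofReal_mul_I θ₁
  have hp3 : ‖p3‖ = 1 := by
    rw [hp3def]; exact Complex.norm_exp_ofReal_mul_I θ₂
  have hne12 : p1 ≠ p2 := by
    have h := exp_ne_exp_of_angle (θ := 0) (θ' := θ₁) h₀ (by linarith)
    simpa [hp1def, hp2def] using h
  have hne13 : p1 ≠ p3 := by
    have h := exp_ne_exp_of_angle (θ := 0) (θ' := θ₂) (by linarith) (by linarith)
    simpa [hp1def, hp3def] using h
  have hne23 : p2 ≠ p3 := exp_ne_exp_of_angle h₁ (by linarith)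
  set e12 := Complex.normSq (p1 - p2) with he12def
  set e13 := Complex.normSq (p1 - p3) with he13def
  set e23 := Complex.normSq (p2 - p3) with he23def
  have he12 : 0 < e12 := Complex.normSq_pos.mpr (sub_ne_zero.mpr hne12)
  have he13 : 0 < e13 := Complex.normSq_pos.mpr (sub_ne_zero.mpr hne13)
  have he23 : 0 < e23 := Complex.normSq_pos.mpr (sub_ne_zero.mpr hne23)
  set u1 := Real.sqrt (e12 * e13 / (4 * e23)) with hu1def
  set u2 := Real.sqrt (e12 * e23 / (4 * e13)) with hu2def
  set u3 := Real.sqrt (e13 * e23 / (4 * e12)) with hu3def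
  have hu1 : 0 < u1 := Real.sqrt_pos.mpr (by positivity)
  have hu2 : 0 < u2 := Real.sqrt_pos.mpr (by positivity)
  have hu3 : 0 < u3 := Real.sqrt_pos.mpr (by positivity)
  have h12u : u1 * u2 = e12 / 4 := sqrt_sys he12 he13 he23
  have h13u : u1 * u3 = e13 / 4 := by
    rw [hu1def, hu3def, show e12 * e13 / (4 * e23) = e13 * e12 / (4 * e23) by ring]
    exact sqrt_sys he13 he12 he23
  have h23u : u2 * u3 = e23 / 4 := by
    rw [hu2def, hu3def, show e12 * e23 / (4 * e13) = e23 * e12 / (4 * e13) by ring,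
      show e13 * e23 / (4 * e12) = e23 * e13 / (4 * e12) by ring]
    exact sqrt_sys he23 he12 he13
  set r1 := u1 / (1 + u1) with hr1def
  set r2 := u2 / (1 + u2) with hr2def
  set r3 := u3 / (1 + u3) with hr3def
  have hr1pos : 0 < r1 := by rw [hr1def]; positivity
  have hr2pos : 0 < r2 := by rw [hr2def]; positivity
  have hr3pos : 0 < r3 := by rw [hr3def]; positivity
  have hr1lt : r1 < 1 := by rw [hr1def, div_lt_one (by linarith)]; linarith
  have hr2lt : r2 < 1 := by rw [hr2def, div_lt_one (by linarith)]; linarith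
  have hr3lt : r3 < 1 := by rw [hr3def, div_lt_one (by linarith)]; linarith
  have hru1 : r1 / (1 - r1) = u1 := ratio_u hu1
  have hru2 : r2 / (1 - r2) = u2 := ratio_u hu2
  have hru3 : r3 / (1 - r3) = u3 := ratio_u hu3
  have heq12 : 4 * r1 * r2 = e12 * (1 - r1) * (1 - r2) := build_eq hu1 hu2 h12u
  have heq13 : 4 * r1 * r3 = e13 * (1 - r1) * (1 - r3) := build_eq hu1 hu3 h13u
  have heq23 : 4 * r2 * r3 = e23 * (1 - r2) * (1 - r3) := build_eq hu2 hu3 h23u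
  set C0 : PCircle := ⟨0, 1, one_pos⟩ with hC0def
  set C1 : PCircle := ⟨(1 - (r1 : ℂ)) * p1, r1, hr1pos⟩ with hC1def
  set C2 : PCircle := ⟨(1 - (r2 : ℂ)) * p2, r2, hr2pos⟩ with hC2def
  set C3 : PCircle := ⟨(1 - (r3 : ℂ)) * p3, r3, hr3pos⟩ with hC3def
  have hT1 : IntTangentAt C1 C0 p1 :=
    (intTangentAt_unit_iff rfl rfl C1 p1 hp1).mpr ⟨hr1lt, rfl⟩
  have hT2 : IntTangentAt C2 C0 p2 :=
    (intTangentAt_unit_iff rfl rfl C2 p2 hp2).mpr ⟨hr2lt, rfl⟩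
  have hT3 : IntTangentAt C3 C0 p3 :=
    (intTangentAt_unit_iff rfl rfl C3 p3 hp3).mpr ⟨hr3lt, rfl⟩
  have hE12 : ExtTangent C1 C2 := (extTangent_iff hp1 hp2 rfl rfl).mpr heq12
  have hE13 : ExtTangent C1 C3 := (extTangent_iff hp1 hp3 rfl rfl).mpr heq13
  have hE23 : ExtTangent C2 C3 := (extTangent_iff hp2 hp3 rfl rfl).mpr heq23
  refine ⟨⟨C0, C1, C2, C3, hE12, hE13, hE23, hT1.1, hT2.1, hT3.1⟩,
    ⟨rfl, rfl, hT1, hT2, hT3⟩, ?_⟩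
  rintro D ⟨hc0, hr0, hD1, hD2, hD3⟩
  obtain ⟨hs1lt, hz1⟩ := (intTangentAt_unit_iff hc0 hr0 D.C1 p1 hp1).mp hD1
  obtain ⟨hs2lt, hz2⟩ := (intTangentAt_unit_iff hc0 hr0 D.C2 p2 hp2).mp hD2
  obtain ⟨hs3lt, hz3⟩ := (intTangentAt_unit_iff hc0 hr0 D.C3 p3 hp3).mp hD3
  set s1 := D.C1.radius
  set s2 := D.C2.radius
  set s3 := D.C3.radius
  have hs1pos : 0 < s1 := D.C1.radius_pos
  have hs2pos : 0 < s2 := D.C2.radius_pos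
  have hs3pos : 0 < s3 := D.C3.radius_pos
  have hk12 : 4 * s1 * s2 = e12 * (1 - s1) * (1 - s2) :=
    (extTangent_iff hp1 hp2 hz1 hz2).mp D.h12
  have hk13 : 4 * s1 * s3 = e13 * (1 - s1) * (1 - s3) :=
    (extTangent_iff hp1 hp3 hz1 hz3).mp D.h13
  have hk23 : 4 * s2 * s3 = e23 * (1 - s2) * (1 - s3) :=
    (extTangent_iff hp2 hp3 hz2 hz3).mp D.h23
  have hv1pos : 0 < s1 / (1 - s1) := by
    apply div_pos hs1pos; linarith
  have hsys := sys_unique (e12 := e12 / 4) (e13 := e13 / 4) (e23 := e23 / 4)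
    (by linarith) hv1pos hu1
    (radius_eq_to_u hs1lt hs2lt hk12) (radius_eq_to_u hs1lt hs3lt hk13)
    (radius_eq_to_u hs2lt hs3lt hk23)
    h12u h13u h23u
  have hs1 : s1 = r1 := u_to_r_inj hs1lt hr1lt (hsys.1.trans hru1.symm)
  have hs2 : s2 = r2 := u_to_r_inj hs2lt hr2lt (hsys.2.1.trans hru2.symm)
  have hs3 : s3 = r3 := u_to_r_inj hs3lt hr3lt (hsys.2.2.trans hru3.symm)
  apply dconfig_ext
  · exact pcircle_ext hc0 hr0
  · exact pcircle_ext (by rw [hz1, hs1]) hs1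
  · exact pcircle_ext (by rw [hz2, hs2]) hs2
  · exact pcircle_ext (by rw [hz3, hs3]) hs3
end
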